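/- For s₀ ∈ (−1, 0), the function F(s₀) := 2·∫_{s₀}^{0} √(t − s₀) / (1 − t²)^{3/2} dt is differentiable with derivative F'(s₀) = −∫_{s₀}^{0} 1 / ((1 − t²)^{3/2}·√(t − s₀)) dt. -/

import Mathlib

open Real MeasureTheory intervalIntegral Set

open Real MeasureTheory intervalIntegral Set

private lemma q_pos {x w : ℝ} (hx : |x| < 1) (hw2 : 0 ≤ 1 - w^2) (hw2' : 1 - w^2 ≤ 1) :
    0 < 1 - (x * (1 - w^2))^2 := by
  have hx2 : x^2 < 1 := by nlinarith [abs_nonneg x, sq_abs x]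
  nlinarith [sq_nonneg x, sq_nonneg (1 - w^2), mul_le_of_le_one_right (sq_nonneg x) (by nlinarith : (1-w^2)^2 ≤ 1)]

private lemma contD (s : ℝ) : Continuous fun w : ℝ => Real.sqrt (1-(s*(1-w^2))^2) := by
  fun_prop

private lemma contOn_invQ (s : ℝ) (hs : |s| < 1) (n : ℕ) :
    ContinuousOn (fun w : ℝ => 1/(Real.sqrt (1-(s*(1-w^2))^2))^n) (Set.Icc 0 1) := by
  apply ContinuousOn.div continuousOn_const (((contD s).pow n)).continuousOn
  intro w hw
  exact pow_ne_zero _ (Real.sqrt_pos.mpr (q_pos hs (by nlinarith [hw.1, hw.2]) (by nlinarith [hw.1]))).ne'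

private lemma hasDerivAt_inner (w : ℝ) (hw2 : 0 ≤ 1 - w^2) (hw2' : 1 - w^2 ≤ 1)
    {x : ℝ} (hx : |x| < 1) :
    HasDerivAt (fun s => w^2 * (1 / (Real.sqrt (1 - (s*(1-w^2))^2))^3))
      (3*x*w^2*(1-w^2)^2 / (Real.sqrt (1 - (x*(1-w^2))^2))^5) x := by
  have hQ : 0 < 1 - (x*(1-w^2))^2 := q_pos hx hw2 hw2'
  have hA : 0 < Real.sqrt (1 - (x*(1-w^2))^2) := Real.sqrt_pos.mpr hQ
  have hmul : HasDerivAt (fun s : ℝ => s*(1-w^2)) (1*(1-w^2)) x := (hasDerivAt_id x).mul_const _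
  have hq : HasDerivAt (fun s : ℝ => 1 - (s*(1-w^2))^2) (-(2*(x*(1-w^2))^1*(1*(1-w^2)))) x :=
    (hmul.pow 2).const_sub 1
  have hsqrt : HasDerivAt (fun s : ℝ => Real.sqrt (1 - (s*(1-w^2))^2))
      (1/(2*Real.sqrt (1-(x*(1-w^2))^2)) * (-(2*(x*(1-w^2))^1*(1*(1-w^2))))) x := by
    simpa [Function.comp_def] using (Real.hasDerivAt_sqrt hQ.ne').comp x hq
  have hinv := ((hsqrt.pow 3).inv (pow_ne_zero 3 hA.ne')).const_mul (w^2)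
  simp only [one_div]
  refine hinv.congr_deriv (Eq.symm ?_)
  simp only [Pi.pow_apply]
  have hT2 : Real.sqrt (1 - (x*(1-w^2))^2) ^ 2 = 1 - (x*(1-w^2))^2 := Real.sq_sqrt hQ.le
  have hA2 : Real.sqrt (1 - x^2*(1-w^2)^2) ≠ 0 := by rw [← mul_pow]; exact hA.ne'
  field_simp [hA2]
  linear_combination (0:ℝ) * hT2

private lemma cov {s : ℝ} (hs : s < 0) (g : ℝ → ℝ) :
    ∫ t in Set.Ioc s 0, g t = ∫ w in Set.Ioc (0:ℝ) 1, |(-2*s*w)| • g (s*(1-w^2)) := by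
  have hsne : s ≠ 0 := hs.ne
  have himg : (fun w : ℝ => s*(1-w^2)) '' Set.Ioc 0 1 = Set.Ioc s 0 := by
    ext t
    constructor
    · rintro ⟨w, ⟨hw0, hw1⟩, rfl⟩
      simp only
      have h1 : s*w^2 < 0 := mul_neg_of_neg_of_pos hs (by positivity)
      have h2 : 0 ≤ 1 - w^2 := by nlinarith
      exact ⟨by nlinarith, mul_nonpos_of_nonpos_of_nonneg hs.le h2⟩
    · rintro ⟨ht1, ht2⟩
      have hpos : 0 < (s-t)/s := div_pos_of_neg_of_neg (by linarith) hs
      have hle : (s-t)/s ≤ 1 := by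
        rw [div_le_one_of_neg hs]  -- iff form
        linarith
      refine ⟨Real.sqrt ((s-t)/s), ⟨Real.sqrt_pos.mpr hpos, Real.sqrt_le_one.mpr hle⟩, ?_⟩
      show s*(1 - Real.sqrt ((s-t)/s)^2) = t
      rw [Real.sq_sqrt hpos.le]
      field_simp
      ring
  rw [← himg, MeasureTheory.integral_image_eq_integral_abs_deriv_smul measurableSet_Ioc
    (f' := fun w => -2*s*w) ?_ ?_ g]
  · intro w _
    have : HasDerivAt (fun w : ℝ => s*(1-w^2)) (-2*s*w) w := by
      have := (((hasDerivAt_id w).pow 2).const_sub 1).const_mul s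
      refine this.congr_deriv (Eq.symm ?_)
      simp [id]
      ring
    exact this.hasDerivWithinAt
  · intro u hu v hv h
    have hu2 : s*(1-u^2) = s*(1-v^2) := h
    have : u^2 = v^2 := by
      have := mul_left_cancel₀ hsne hu2
      linarith
    have := congrArg Real.sqrt this
    rwa [Real.sqrt_sq hu.1.le, Real.sqrt_sq hv.1.le] at this

private lemma lemA {s : ℝ} (hs : s ∈ Set.Ioo (-1:ℝ) 0) :
    (∫ t in s..0, Real.sqrt (t - s) / (Real.sqrt (1 - t ^ 2)) ^ 3)
      = 2*(-s)*Real.sqrt (-s) *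
        ∫ w in (0:ℝ)..1, w^2 * (1 / (Real.sqrt (1 - (s*(1-w^2))^2))^3) := by
  rw [intervalIntegral.integral_of_le hs.2.le, intervalIntegral.integral_of_le zero_le_one,
    cov hs.2, ← MeasureTheory.integral_const_mul]
  refine MeasureTheory.setIntegral_congr_fun measurableSet_Ioc ?_
  intro w hw
  simp only [smul_eq_mul]
  have habs : |(-2*s*w)| = 2*(-s)*w := by
    rw [abs_of_pos (by nlinarith [hw.1, hs.2])]; ring
  have hnum : Real.sqrt (s*(1-w^2) - s) = Real.sqrt (-s) * w := by
    rw [show s*(1-w^2) - s = (-s) * w^2 by ring, Real.sqrt_mul (by linarith [hs.2]),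
      Real.sqrt_sq hw.1.le]
  rw [habs, hnum]
  ring

private lemma lemB {s : ℝ} (hs : s ∈ Set.Ioo (-1:ℝ) 0) :
    (∫ t in s..0, 1 / ((Real.sqrt (1 - t ^ 2)) ^ 3 * Real.sqrt (t - s)))
      = 2*Real.sqrt (-s) *
        ∫ w in (0:ℝ)..1, 1 / (Real.sqrt (1 - (s*(1-w^2))^2))^3 := by
  rw [intervalIntegral.integral_of_le hs.2.le, intervalIntegral.integral_of_le zero_le_one,
    cov hs.2, ← MeasureTheory.integral_const_mul]
  refine MeasureTheory.setIntegral_congr_fun measurableSet_Ioc ?_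
  intro w hw
  simp only [smul_eq_mul]
  have hsabs : |s| < 1 := abs_lt.mpr ⟨hs.1, by linarith [hs.2]⟩
  have hQ : 0 < 1 - (s*(1-w^2))^2 := q_pos hsabs (by nlinarith [hw.1, hw.2]) (by nlinarith [hw.1])
  have hD : 0 < Real.sqrt (1 - (s*(1-w^2))^2) := Real.sqrt_pos.mpr hQ
  have hsa : 0 < Real.sqrt (-s) := Real.sqrt_pos.mpr (by linarith [hs.2])
  have habs : |(-2*s*w)| = 2*(-s)*w := by
    rw [abs_of_pos (by nlinarith [hw.1, hs.2])]; ring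
  have hnum : Real.sqrt (s*(1-w^2) - s) = Real.sqrt (-s) * w := by
    rw [show s*(1-w^2) - s = (-s) * w^2 by ring, Real.sqrt_mul (by linarith [hs.2]),
      Real.sqrt_sq hw.1.le]
  rw [habs, hnum]
  have hsq : Real.sqrt (-s) * Real.sqrt (-s) = -s := Real.mul_self_sqrt (by linarith [hs.2])
  have hD2 : Real.sqrt (1 - s^2*(1-w^2)^2) ≠ 0 := by rw [← mul_pow]; exact hD.ne'
  field_simp [hD.ne', hsa.ne', hw.1.ne', hD2]
  linear_combination (-1:ℝ) * hsq

private lemma hasDerivAt_w (s : ℝ) {w : ℝ} (hw2 : 0 ≤ 1 - w^2) (hw2' : 1 - w^2 ≤ 1)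
    (hs : |s| < 1) :
    HasDerivAt (fun w => w*(1-w^2) * (1 / (Real.sqrt (1 - (s*(1-w^2))^2))^3))
      ((1 - 3*w^2) * (1 / (Real.sqrt (1 - (s*(1-w^2))^2))^3)
        - 6*s^2*(w^2*(1-w^2)^2 * (1 / (Real.sqrt (1 - (s*(1-w^2))^2))^5))) w := by
  have hQ : 0 < 1 - (s*(1-w^2))^2 := q_pos hs hw2 hw2'
  have hA : 0 < Real.sqrt (1 - (s*(1-w^2))^2) := Real.sqrt_pos.mpr hQ
  have hu : HasDerivAt (fun w : ℝ => s*(1-w^2)) (s * (-(2*(id w)^(2-1)*1))) w :=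
    (((hasDerivAt_id w).pow 2).const_sub 1).const_mul s
  have hq : HasDerivAt (fun w : ℝ => 1 - (s*(1-w^2))^2)
      (-(2*(s*(1-w^2))^(2-1) * (s * (-(2*(id w)^(2-1)*1))))) w :=
    (hu.pow 2).const_sub 1
  have hsqrt : HasDerivAt (fun w : ℝ => Real.sqrt (1 - (s*(1-w^2))^2))
      (1/(2*Real.sqrt (1-(s*(1-w^2))^2)) * (-(2*(s*(1-w^2))^(2-1) * (s * (-(2*(id w)^(2-1)*1)))))) w := by
    simpa [Function.comp_def] using (Real.hasDerivAt_sqrt hQ.ne').comp w hq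
  have hinv := (hsqrt.pow 3).inv (pow_ne_zero 3 hA.ne')
  have hp : HasDerivAt (fun w : ℝ => w*(1-w^2)) (1*(1-w^2) + w * (-(2*(id w)^(2-1)*1))) w :=
    (hasDerivAt_id w).mul (((hasDerivAt_id w).pow 2).const_sub 1)
  have hf := hp.mul hinv
  simp only [one_div]
  refine hf.congr_deriv (Eq.symm ?_)
  simp only [Pi.pow_apply, Pi.inv_apply, id]
  set T := Real.sqrt (1 - (s*(1-w^2))^2) with hT
  have hT2 : T^2 = 1 - (s*(1-w^2))^2 := Real.sq_sqrt hQ.le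
  have hTne : T ≠ 0 := hA.ne'
  field_simp
  linear_combination (0:ℝ) * hT2

private lemma parts {s : ℝ} (hs : |s| < 1) :
    (∫ w in (0:ℝ)..1, 1 / (Real.sqrt (1-(s*(1-w^2))^2))^3)
      = 3 * (∫ w in (0:ℝ)..1, w^2 * (1 / (Real.sqrt (1-(s*(1-w^2))^2))^3))
        + 6*s^2 * ∫ w in (0:ℝ)..1, w^2*(1-w^2)^2 * (1 / (Real.sqrt (1-(s*(1-w^2))^2))^5) := by
  have hIcc : Set.uIcc (0:ℝ) 1 = Set.Icc 0 1 := Set.uIcc_of_le zero_le_one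
  have hcont3 := contOn_invQ s hs 3
  have hcont5 := contOn_invQ s hs 5
  have hK : IntervalIntegrable (fun w : ℝ => 1 / (Real.sqrt (1-(s*(1-w^2))^2))^3) volume 0 1 := by
    apply ContinuousOn.intervalIntegrable; rw [hIcc]; exact hcont3
  have hJ : IntervalIntegrable (fun w : ℝ => w^2 * (1 / (Real.sqrt (1-(s*(1-w^2))^2))^3)) volume 0 1 := by
    apply ContinuousOn.intervalIntegrable; rw [hIcc]
    exact (continuous_pow 2).continuousOn.mul hcont3
  have hL : IntervalIntegrable (fun w : ℝ => w^2*(1-w^2)^2 * (1 / (Real.sqrt (1-(s*(1-w^2))^2))^5)) volume 0 1 := by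
    apply ContinuousOn.intervalIntegrable; rw [hIcc]
    exact (Continuous.continuousOn (by fun_prop)).mul hcont5
  have hderiv : ∀ w ∈ Set.uIcc (0:ℝ) 1,
      HasDerivAt (fun w => w*(1-w^2) * (1 / (Real.sqrt (1 - (s*(1-w^2))^2))^3))
        ((1 - 3*w^2) * (1 / (Real.sqrt (1 - (s*(1-w^2))^2))^3)
          - 6*s^2*(w^2*(1-w^2)^2 * (1 / (Real.sqrt (1 - (s*(1-w^2))^2))^5))) w := by
    intro w hw
    rw [hIcc] at hw
    exact hasDerivAt_w s (by nlinarith [hw.1, hw.2]) (by nlinarith [hw.1]) hs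
  have hint : IntervalIntegrable (fun w : ℝ =>
      (1 - 3*w^2) * (1 / (Real.sqrt (1 - (s*(1-w^2))^2))^3)
        - 6*s^2*(w^2*(1-w^2)^2 * (1 / (Real.sqrt (1 - (s*(1-w^2))^2))^5))) volume 0 1 := by
    apply ContinuousOn.intervalIntegrable; rw [hIcc]
    exact ((Continuous.continuousOn (by fun_prop)).mul hcont3).sub
      (ContinuousOn.const_smul ((Continuous.continuousOn (by fun_prop)).mul hcont5) (6*s^2))
  have hftc := intervalIntegral.integral_eq_sub_of_hasDerivAt hderiv hint
  have hexp : (∫ w in (0:ℝ)..1,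
      ((1 - 3*w^2) * (1 / (Real.sqrt (1 - (s*(1-w^2))^2))^3)
        - 6*s^2*(w^2*(1-w^2)^2 * (1 / (Real.sqrt (1 - (s*(1-w^2))^2))^5))))
      = (∫ w in (0:ℝ)..1, 1 / (Real.sqrt (1-(s*(1-w^2))^2))^3)
        - 3 * (∫ w in (0:ℝ)..1, w^2 * (1 / (Real.sqrt (1-(s*(1-w^2))^2))^3))
        - 6*s^2 * ∫ w in (0:ℝ)..1, w^2*(1-w^2)^2 * (1 / (Real.sqrt (1-(s*(1-w^2))^2))^5) := by
    rw [show (fun w : ℝ =>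
        ((1 - 3*w^2) * (1 / (Real.sqrt (1 - (s*(1-w^2))^2))^3)
          - 6*s^2*(w^2*(1-w^2)^2 * (1 / (Real.sqrt (1 - (s*(1-w^2))^2))^5))))
      = (fun w : ℝ =>
        (1 / (Real.sqrt (1-(s*(1-w^2))^2))^3 - 3 * (w^2 * (1 / (Real.sqrt (1-(s*(1-w^2))^2))^3)))
          - 6*s^2 * (w^2*(1-w^2)^2 * (1 / (Real.sqrt (1-(s*(1-w^2))^2))^5))) from funext fun w => by ring]
    rw [intervalIntegral.integral_sub (hK.sub (hJ.const_mul 3)) (hL.const_mul (6*s^2)),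
      intervalIntegral.integral_sub hK (hJ.const_mul 3),
      intervalIntegral.integral_const_mul, intervalIntegral.integral_const_mul]
  rw [hexp] at hftc
  norm_num [one_div] at hftc ⊢
  linarith

set_option maxHeartbeats 1000000 in
/-- Formula (17): differentiating the integrated-by-parts form (16),
`F(s₀) = 2∫_{s₀}^{0} √(t−s₀)/(1−t²)^{3/2} dt` has derivative
`F'(s₀) = −∫_{s₀}^{0} dt/((1−t²)^{3/2}·√(t−s₀))` for `s₀ ∈ (−1, 0)`. -/
theorem stmt_16 (s0 : ℝ) (hs0 : s0 ∈ Set.Ioo (-1 : ℝ) 0) :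
    HasDerivAt
      (fun s => 2 * ∫ t in s..0, Real.sqrt (t - s) / (Real.sqrt (1 - t ^ 2)) ^ 3)
      (-∫ t in s0..0, 1 / ((Real.sqrt (1 - t ^ 2)) ^ 3 * Real.sqrt (t - s0))) s0 := by
  obtain ⟨h1, h2⟩ := hs0
  have hsabs : |s0| < 1 := abs_lt.mpr ⟨h1, by linarith⟩
  have ha0 : (0:ℝ) < -s0 := by linarith
  have hsa : 0 < Real.sqrt (-s0) := Real.sqrt_pos.mpr ha0
  set m : ℝ := (1 - s0)/2 with hmdef
  have hm0 : 0 < m := by simp [hmdef]; linarith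
  have hm1 : m < 1 := by simp [hmdef]; linarith
  have hε : (0:ℝ) < (1 + s0)/2 := by linarith
  have hball : ∀ x ∈ Metric.ball s0 ((1 + s0)/2), |x| ≤ m := by
    intro x hx
    rw [Metric.mem_ball, Real.dist_eq] at hx
    obtain ⟨hxa, hxb⟩ := abs_lt.mp hx
    rw [hmdef]
    apply abs_le.mpr
    constructor <;> linarith
  have hsm : 0 < Real.sqrt (1 - m^2) := Real.sqrt_pos.mpr (by nlinarith)
  -- J derivative via dominated convergence
  have hJd := (intervalIntegral.hasDerivAt_integral_of_dominated_loc_of_deriv_le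
    (μ := volume) (a := (0:ℝ)) (b := 1) (x₀ := s0) (s := Metric.ball s0 ((1 + s0)/2))
    (F := fun x w => w^2 * (1 / (Real.sqrt (1 - (x*(1-w^2))^2))^3))
    (F' := fun x w => 3*x*w^2*(1-w^2)^2 / (Real.sqrt (1 - (x*(1-w^2))^2))^5)
    (bound := fun _ => 3 / (Real.sqrt (1 - m^2))^5)
    (Metric.ball_mem_nhds s0 hε)
    (Filter.Eventually.of_forall fun x =>
      ((Measurable.aestronglyMeasurable (by fun_prop)).restrict))
    (by
      apply ContinuousOn.intervalIntegrable
      rw [Set.uIcc_of_le zero_le_one]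
      exact (continuous_pow 2).continuousOn.mul (contOn_invQ s0 hsabs 3))
    ((Measurable.aestronglyMeasurable (by fun_prop)).restrict)
    (MeasureTheory.ae_of_all _ (by
      intro w hw x hx
      rw [Set.uIoc_of_le zero_le_one] at hw
      have hxm : |x| ≤ m := hball x hx
      have hx1 : |x| < 1 := lt_of_le_of_lt hxm hm1
      have hw1 : 0 ≤ 1 - w^2 := by nlinarith [hw.1, hw.2]
      have hw2 : 1 - w^2 ≤ 1 := by nlinarith [hw.1]
      have hx2 : x^2 ≤ m^2 := by nlinarith [sq_abs x, abs_nonneg x]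
      have hc1 : (1-w^2)^2 ≤ 1 := by nlinarith
      have hQm : 1 - m^2 ≤ 1 - (x*(1-w^2))^2 := by
        nlinarith [mul_le_of_le_one_right (sq_nonneg x) hc1]
      have hsq5 : (Real.sqrt (1 - m^2))^5 ≤ (Real.sqrt (1 - (x*(1-w^2))^2))^5 :=
        pow_le_pow_left₀ hsm.le (Real.sqrt_le_sqrt hQm) 5
      rw [Real.norm_eq_abs, abs_div, abs_of_nonneg (by positivity :
        (0:ℝ) ≤ (Real.sqrt (1 - (x*(1-w^2))^2))^5)]
      apply div_le_div₀ (by norm_num) ?_ (by positivity) hsq5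
      have hxle : |x| ≤ 1 := hx1.le
      have e1 : |3*x*w^2*(1-w^2)^2| = 3 * abs x * (w^2*(1-w^2)^2) := by
        simp only [abs_mul, abs_of_nonneg (sq_nonneg w), abs_of_nonneg (sq_nonneg (1-w^2)),
          abs_of_nonneg (show (0:ℝ) ≤ 3 by norm_num)]
        ring
      rw [e1]
      have q1 : w^2*(1-w^2)^2 ≤ 1 := by nlinarith [hw.1, hw.2]
      have q0 : 0 ≤ w^2*(1-w^2)^2 := by positivity
      nlinarith [mul_le_one₀ hxle q0 q1, abs_nonneg x]))
    intervalIntegrable_const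
    (MeasureTheory.ae_of_all _ (by
      intro w hw x hx
      rw [Set.uIoc_of_le zero_le_one] at hw
      have hx1 : |x| < 1 := lt_of_le_of_lt (hball x hx) hm1
      exact hasDerivAt_inner w (by nlinarith [hw.1, hw.2]) (by nlinarith [hw.1]) hx1))).2
  -- derivative of the prefactor
  have hneg : HasDerivAt (fun s : ℝ => -s) (-1) s0 := (hasDerivAt_id s0).neg
  have hsqrtm : HasDerivAt (fun s : ℝ => Real.sqrt (-s))
      (1/(2*Real.sqrt (-s0)) * (-1)) s0 := by
    simpa [Function.comp_def] using (Real.hasDerivAt_sqrt ha0.ne').comp s0 hneg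
  have hm1' : HasDerivAt (fun s : ℝ => (-s)*Real.sqrt (-s))
      ((-1)*Real.sqrt (-s0) + (-s0)*(1/(2*Real.sqrt (-s0)) * (-1))) s0 := hneg.mul hsqrtm
  have hprod := (hm1'.const_mul 4).mul hJd
  have hEq : (fun s => 2 * ∫ t in s..0, Real.sqrt (t - s) / (Real.sqrt (1 - t ^ 2)) ^ 3)
      =ᶠ[nhds s0] (fun s => (4*((-s)*Real.sqrt (-s))) *
        ∫ w in (0:ℝ)..1, w^2 * (1 / (Real.sqrt (1 - (s*(1-w^2))^2))^3)) := by
    filter_upwards [isOpen_Ioo.mem_nhds (⟨h1, h2⟩ : s0 ∈ Set.Ioo (-1:ℝ) 0)] with s hsm'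
    rw [lemA hsm']
    ring
  have final := hprod.congr_of_eventuallyEq hEq
  refine final.congr_deriv (Eq.symm ?_)
  -- equality of derivative values
  rw [lemB ⟨h1, h2⟩]
  have hJ'eq : (∫ w in (0:ℝ)..1, 3*s0*w^2*(1-w^2)^2 / (Real.sqrt (1 - (s0*(1-w^2))^2))^5)
      = (3*s0) * ∫ w in (0:ℝ)..1, w^2*(1-w^2)^2 * (1 / (Real.sqrt (1-(s0*(1-w^2))^2))^5) := by
    rw [← intervalIntegral.integral_const_mul]
    apply intervalIntegral.integral_congr
    intro w _
    ring
  have hsq : Real.sqrt (-s0) * Real.sqrt (-s0) = -s0 := Real.mul_self_sqrt ha0.le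
  have d1eq : (-1) * Real.sqrt (-s0) + (-s0) * (1/(2*Real.sqrt (-s0)) * (-1))
      = -(3/2) * Real.sqrt (-s0) := by
    field_simp
    linear_combination hsq
  rw [hJ'eq, parts hsabs, d1eq]
  ring
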